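/- Let μ, λ ∈ ℝ. For every ε > 0 there exists a constant C_ε > 0 such that for every finitely supported sequence a : ℕ → ℂ, ‖H_{μ,λ}a‖ ≤ ε · ‖Ga‖ + C_ε · ‖a‖, i.e. the Gribov operator H_{μ,λ} is G-compact (relatively compact with respect to G = A*³A³). -/
import Mathlib

private lemma mink2 (s : Finset ℕ) (f g : ℕ → ℝ) :
    Real.sqrt (∑ n ∈ s, (f n + g n)^2) ≤
      Real.sqrt (∑ n ∈ s, (f n)^2) + Real.sqrt (∑ n ∈ s, (g n)^2) := by
  set A := Real.sqrt (∑ n ∈ s, (f n)^2) with hA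
  set B := Real.sqrt (∑ n ∈ s, (g n)^2) with hB
  have hA0 : 0 ≤ A := Real.sqrt_nonneg _
  have hB0 : 0 ≤ B := Real.sqrt_nonneg _
  have hA2 : A^2 = ∑ n ∈ s, (f n)^2 := Real.sq_sqrt (by positivity)
  have hB2 : B^2 = ∑ n ∈ s, (g n)^2 := Real.sq_sqrt (by positivity)
  have hcs : ∑ n ∈ s, f n * g n ≤ A * B := Real.sum_mul_le_sqrt_mul_sqrt s f g
  have key : ∑ n ∈ s, (f n + g n)^2 ≤ (A + B)^2 := by
    have : ∑ n ∈ s, (f n + g n)^2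
        = (∑ n ∈ s, (f n)^2) + 2 * (∑ n ∈ s, f n * g n) + ∑ n ∈ s, (g n)^2 := by
      rw [Finset.mul_sum, ← Finset.sum_add_distrib, ← Finset.sum_add_distrib]
      exact Finset.sum_congr rfl fun n _ => by ring
    nlinarith
  calc Real.sqrt (∑ n ∈ s, (f n + g n)^2) ≤ Real.sqrt ((A+B)^2) := Real.sqrt_le_sqrt key
  _ = A + B := Real.sqrt_sq (by positivity)

private lemma coeff_bound (K δ : ℝ) (hK : 1 ≤ K) (hδ : 0 < δ) :
    ∃ C > 0, ∀ n : ℕ, K * n * (n+1) ≤ δ * ((n * (n-1) * (n-2) : ℕ) : ℝ) + C := by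
  set M : ℕ := max 4 ⌈8 * K / δ⌉₊ with hM
  refine ⟨K * M * (M+1) + 1, by positivity, fun n => ?_⟩
  have hg : (0:ℝ) ≤ ((n * (n-1) * (n-2) : ℕ) : ℝ) := Nat.cast_nonneg _
  rcases le_or_gt n M with h | h
  · have hnM : (n:ℝ) ≤ M := Nat.cast_le.2 h
    have hn0 : (0:ℝ) ≤ n := Nat.cast_nonneg _
    have h1 : (n:ℝ) * (n+1) ≤ (M:ℝ) * (M+1) := by nlinarith
    have h2 : K * ((n:ℝ) * (n+1)) ≤ K * ((M:ℝ) * (M+1)) :=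
      mul_le_mul_of_nonneg_left h1 (le_trans zero_le_one hK)
    nlinarith [mul_nonneg hδ.le hg]
  · have h4 : 4 ≤ M := le_max_left _ _
    have h5 : 5 ≤ n := by omega
    have hx : (5:ℝ) ≤ n := by exact_mod_cast h5
    have hMn : (M:ℝ) ≤ n := Nat.cast_le.2 h.le
    have hceil : 8 * K / δ ≤ (M:ℝ) :=
      le_trans (Nat.le_ceil _) (Nat.cast_le.2 (le_max_right 4 _))
    have h8 : 8 * K ≤ δ * n := by
      rw [div_le_iff₀ hδ] at hceil; nlinarith
    have hcast : ((n * (n-1) * (n-2) : ℕ) : ℝ) = n * ((n:ℝ) - 1) * ((n:ℝ) - 2) := by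
      have h1 : (1:ℕ) ≤ n := by omega
      have h2 : (2:ℕ) ≤ n := by omega
      push_cast [Nat.cast_sub h1, Nat.cast_sub h2]
      ring
    rw [hcast]
    have hC : (0:ℝ) < K * M * (M+1) + 1 := by positivity
    have a1 : K * ((n:ℝ)+1) ≤ 2*K*n := by nlinarith
    have a2 : ((n:ℝ)-1) * ((n:ℝ)-2) ≥ (n:ℝ)^2/4 := by nlinarith
    have a3 : δ * (n:ℝ) * ((n:ℝ)^2/4) ≥ 2*K*(n:ℝ)*(n:ℝ) := by nlinarith
    nlinarith [sq_nonneg (n:ℝ), mul_pos hδ (lt_of_lt_of_le (by norm_num : (0:ℝ)<5) hx)]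


/-- The Gribov matrix `H_{μ,λ}` acting on sequences:
`(Ha)₀ = 0` and `(Ha)ₙ = iλ(n−1)√n·a_{n−1} + μn·aₙ + iλn√(n+1)·a_{n+1}` for `n ≥ 1`. -/
noncomputable def gribovH (μ lam : ℝ) (a : ℕ → ℂ) : ℕ → ℂ := fun n =>
  if n = 0 then 0 else
    Complex.I * (lam : ℂ) * ((n - 1 : ℕ) : ℂ) * (Real.sqrt n : ℂ) * a (n - 1)
      + (μ : ℂ) * (n : ℂ) * a n
      + Complex.I * (lam : ℂ) * (n : ℂ) * (Real.sqrt (n + 1) : ℂ) * a (n + 1)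

/-- The diagonal matrix of `G = A*³A³`: `(Ga)ₙ = n(n−1)(n−2)·aₙ`. -/
noncomputable def gOp (a : ℕ → ℂ) : ℕ → ℂ := fun n =>
  ((n * (n - 1) * (n - 2) : ℕ) : ℂ) * a n

/-- The ℓ²-norm of a sequence. -/
noncomputable def l2norm (a : ℕ → ℂ) : ℝ := Real.sqrt (∑' n, ‖a n‖ ^ 2)

/-- `H_{μ,λ}` is `G`-compact: for every `ε > 0` there is `C_ε > 0` such that
`‖H_{μ,λ}a‖ ≤ ε·‖Ga‖ + C_ε·‖a‖` for all finitely supported sequences `a`. -/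
theorem gribovH_relatively_compact (μ lam : ℝ) (ε : ℝ) (hε : 0 < ε) :
    ∃ C > 0, ∀ a : ℕ → ℂ, (Function.support a).Finite →
      l2norm (gribovH μ lam a) ≤ ε * l2norm (gOp a) + C * l2norm a := by
  have habμ : (0:ℝ) ≤ |μ| := abs_nonneg μ
  have habl : (0:ℝ) ≤ |lam| := abs_nonneg lam
  set K : ℝ := |μ| + |lam| + 1 with hKdef
  have hK : 1 ≤ K := by simp only [hKdef]; linarith
  have hμK : |μ| ≤ K := by simp only [hKdef]; linarith
  have hlK : |lam| ≤ K := by simp only [hKdef]; linarith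
  have hK0 : (0:ℝ) ≤ K := le_trans zero_le_one hK
  have hδ : 0 < ε/3 := by linarith
  obtain ⟨C₀, hC₀, hcoef⟩ := coeff_bound K (ε/3) hK hδ
  refine ⟨3*C₀, by linarith, fun a ha => ?_⟩
  obtain ⟨N, hN⟩ : ∃ N, ∀ n, N ≤ n → a n = 0 := by
    refine ⟨ha.toFinset.sup id + 1, fun n hn => ?_⟩
    by_contra h
    have h1 : n ∈ ha.toFinset := ha.mem_toFinset.2 h
    have h2 := Finset.le_sup (f := id) h1
    simp only [id] at h2
    omega
  set r := Finset.range (N+1) with hr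
  have hl2 : ∀ b : ℕ → ℂ, (∀ n, N+1 ≤ n → b n = 0) →
      l2norm b = Real.sqrt (∑ n ∈ r, ‖b n‖^2) := by
    intro b hb
    unfold l2norm
    congr 1
    refine tsum_eq_sum fun n hn => ?_
    have hn' : N+1 ≤ n := by
      rw [hr, Finset.mem_range, not_lt] at hn; exact hn
    simp [hb n hn']
  -- the three pieces
  set t1 : ℕ → ℂ := fun n =>
    Complex.I * (lam : ℂ) * ((n - 1 : ℕ) : ℂ) * (Real.sqrt n : ℂ) * a (n - 1) with ht1
  set t2 : ℕ → ℂ := fun n => (μ : ℂ) * (n : ℂ) * a n with ht2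
  set t3 : ℕ → ℂ := fun n =>
    Complex.I * (lam : ℂ) * (n : ℂ) * (Real.sqrt (n + 1) : ℂ) * a (n + 1) with ht3
  have hsplit : ∀ n, gribovH μ lam a n = t1 n + t2 n + t3 n := by
    intro n
    rcases n with _ | n
    · simp [gribovH, ht1, ht2, ht3]
    · simp [gribovH, ht1, ht2, ht3]
  -- norms of the pieces
  have hn1 : ∀ n : ℕ, ‖t1 (n+1)‖ = |lam| * n * Real.sqrt ((n:ℝ)+1) * ‖a n‖ := by
    intro n
    simp only [ht1, Nat.add_sub_cancel]
    rw [norm_mul, norm_mul, norm_mul, norm_mul]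
    simp [Complex.norm_real, Real.norm_eq_abs, abs_of_nonneg (Real.sqrt_nonneg _)]
  have hn2 : ∀ n : ℕ, ‖t2 n‖ = |μ| * n * ‖a n‖ := by
    intro n
    simp only [ht2]
    rw [norm_mul, norm_mul]
    simp [Real.norm_eq_abs]
  have hn3 : ∀ n : ℕ, ‖t3 n‖ = |lam| * n * Real.sqrt ((n:ℝ)+1) * ‖a (n+1)‖ := by
    intro n
    simp only [ht3]
    rw [norm_mul, norm_mul, norm_mul, norm_mul]
    simp [Complex.norm_real, Real.norm_eq_abs, abs_of_nonneg (Real.sqrt_nonneg _)]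
  have hsqrt : ∀ n : ℕ, Real.sqrt ((n:ℝ)+1) ≤ (n:ℝ)+1 := by
    intro n
    have hnn : (0:ℝ) ≤ n := Nat.cast_nonneg _
    have h1 : ((n:ℝ)+1) ≤ ((n:ℝ)+1)^2 := by nlinarith
    calc Real.sqrt ((n:ℝ)+1) ≤ Real.sqrt (((n:ℝ)+1)^2) := Real.sqrt_le_sqrt h1
    _ = (n:ℝ)+1 := Real.sqrt_sq (by positivity)
  -- the diagonal majorant
  set D : ℕ → ℝ := fun n => K * n * (n+1) * ‖a n‖ with hD
  have hDnn : ∀ n, 0 ≤ D n := by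
    intro n; simp only [hD]; positivity
  have B1 : ∀ n : ℕ, ‖t1 (n+1)‖ ≤ D n := by
    intro n
    rw [hn1]
    simp only [hD]
    have h1 : |lam| * (n:ℝ) * Real.sqrt ((n:ℝ)+1) ≤ K * n * ((n:ℝ)+1) := by
      gcongr
      exact hsqrt n
    exact mul_le_mul_of_nonneg_right h1 (norm_nonneg _)
  have B2 : ∀ n : ℕ, ‖t2 n‖ ≤ D n := by
    intro n
    rw [hn2]
    simp only [hD]
    have h1 : |μ| * (n:ℝ) ≤ K * n * ((n:ℝ)+1) := by
      have hnn : (0:ℝ) ≤ n := Nat.cast_nonneg _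
      nlinarith [mul_nonneg hK0 hnn, mul_le_mul_of_nonneg_right hμK hnn,
        mul_nonneg (mul_nonneg hK0 hnn) hnn]
    exact mul_le_mul_of_nonneg_right h1 (norm_nonneg _)
  have B3 : ∀ n : ℕ, ‖t3 n‖ ≤ D (n+1) := by
    intro n
    rw [hn3]
    simp only [hD]
    have h1 : |lam| * (n:ℝ) * Real.sqrt ((n:ℝ)+1) ≤ K * ((n:ℕ)+1 : ℕ) * (((n:ℕ)+1 : ℕ)+1) := by
      push_cast
      gcongr
      · linarith
      · linarith [hsqrt n]
    exact mul_le_mul_of_nonneg_right h1 (norm_nonneg _)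
  set T : ℝ := ∑ n ∈ r, (D n)^2 with hT
  have hTnn : 0 ≤ T := Finset.sum_nonneg fun n _ => sq_nonneg _
  -- sums of the three pieces bounded by T
  have S1 : ∑ n ∈ r, ‖t1 n‖^2 ≤ T := by
    rw [hr, Finset.sum_range_succ']
    have ht10 : ‖t1 0‖ = 0 := by simp [ht1]
    rw [ht10]
    simp only [ne_eq, OfNat.ofNat_ne_zero, not_false_eq_true, zero_pow, add_zero]
    calc ∑ n ∈ Finset.range N, ‖t1 (n+1)‖^2
        ≤ ∑ n ∈ Finset.range N, (D n)^2 :=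
          Finset.sum_le_sum fun n _ => pow_le_pow_left₀ (norm_nonneg _) (B1 n) 2
      _ ≤ T := by
          rw [hT, hr]
          exact Finset.sum_le_sum_of_subset_of_nonneg
            (Finset.range_subset_range.2 (Nat.le_succ N)) (fun n _ _ => sq_nonneg _)
  have S2 : ∑ n ∈ r, ‖t2 n‖^2 ≤ T :=
    Finset.sum_le_sum fun n _ => pow_le_pow_left₀ (norm_nonneg _) (B2 n) 2
  have S3 : ∑ n ∈ r, ‖t3 n‖^2 ≤ T := by
    have hT' : T = ∑ n ∈ Finset.range N, (D (n+1))^2 := by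
      rw [hT, hr, Finset.sum_range_succ']
      have : D 0 = 0 := by simp [hD]
      rw [this]
      simp
    rw [hr, Finset.sum_range_succ, hT']
    have ht3N : ‖t3 N‖ = 0 := by
      simp only [ht3]
      rw [hN (N+1) (Nat.le_succ N)]
      simp
    rw [ht3N]
    simp only [ne_eq, OfNat.ofNat_ne_zero, not_false_eq_true, zero_pow, add_zero]
    exact Finset.sum_le_sum fun n _ => pow_le_pow_left₀ (norm_nonneg _) (B3 n) 2
  -- vanishing of the operators beyond N
  have hHv : ∀ n, N+1 ≤ n → gribovH μ lam a n = 0 := by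
    intro n hn
    have h0 : n ≠ 0 := by omega
    simp [gribovH, h0, hN (n-1) (by omega), hN n (by omega), hN (n+1) (by omega)]
  have hGv : ∀ n, N+1 ≤ n → gOp a n = 0 := by
    intro n hn
    simp [gOp, hN n (by omega)]
  have hav : ∀ n, N+1 ≤ n → a n = 0 := fun n hn => hN n (by omega)
  rw [hl2 _ hHv, hl2 _ hGv, hl2 _ hav]
  -- main chain
  have step1 : Real.sqrt (∑ n ∈ r, ‖gribovH μ lam a n‖^2)
      ≤ Real.sqrt (∑ n ∈ r, ((‖t1 n‖ + ‖t2 n‖) + ‖t3 n‖)^2) := by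
    apply Real.sqrt_le_sqrt
    refine Finset.sum_le_sum fun n _ => ?_
    have h1 : ‖gribovH μ lam a n‖ ≤ ‖t1 n‖ + ‖t2 n‖ + ‖t3 n‖ := by
      rw [hsplit n]
      exact norm_add₃_le
    exact pow_le_pow_left₀ (norm_nonneg _) h1 2
  have step2 : Real.sqrt (∑ n ∈ r, ((‖t1 n‖ + ‖t2 n‖) + ‖t3 n‖)^2)
      ≤ Real.sqrt (∑ n ∈ r, (‖t1 n‖ + ‖t2 n‖)^2) + Real.sqrt (∑ n ∈ r, ‖t3 n‖^2) :=
    mink2 r _ _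
  have step3 : Real.sqrt (∑ n ∈ r, (‖t1 n‖ + ‖t2 n‖)^2)
      ≤ Real.sqrt (∑ n ∈ r, ‖t1 n‖^2) + Real.sqrt (∑ n ∈ r, ‖t2 n‖^2) :=
    mink2 r _ _
  have sqT : ∀ (X : ℝ), (∑ n ∈ r, X^0 = X^0) → True := fun _ _ => trivial
  have hb1 : Real.sqrt (∑ n ∈ r, ‖t1 n‖^2) ≤ Real.sqrt T := Real.sqrt_le_sqrt S1
  have hb2 : Real.sqrt (∑ n ∈ r, ‖t2 n‖^2) ≤ Real.sqrt T := Real.sqrt_le_sqrt S2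
  have hb3 : Real.sqrt (∑ n ∈ r, ‖t3 n‖^2) ≤ Real.sqrt T := Real.sqrt_le_sqrt S3
  have hHbound : Real.sqrt (∑ n ∈ r, ‖gribovH μ lam a n‖^2) ≤ 3 * Real.sqrt T := by
    calc Real.sqrt (∑ n ∈ r, ‖gribovH μ lam a n‖^2)
        ≤ Real.sqrt (∑ n ∈ r, ((‖t1 n‖ + ‖t2 n‖) + ‖t3 n‖)^2) := step1
      _ ≤ Real.sqrt (∑ n ∈ r, (‖t1 n‖ + ‖t2 n‖)^2) + Real.sqrt (∑ n ∈ r, ‖t3 n‖^2) := step2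
      _ ≤ (Real.sqrt (∑ n ∈ r, ‖t1 n‖^2) + Real.sqrt (∑ n ∈ r, ‖t2 n‖^2))
            + Real.sqrt (∑ n ∈ r, ‖t3 n‖^2) := by linarith
      _ ≤ 3 * Real.sqrt T := by linarith
  -- bound sqrt T
  have hGnorm : ∀ n : ℕ, ‖gOp a n‖ = ((n * (n-1) * (n-2) : ℕ) : ℝ) * ‖a n‖ := by
    intro n
    simp [gOp, norm_mul]
  have hTb : Real.sqrt T ≤ (ε/3) * Real.sqrt (∑ n ∈ r, ‖gOp a n‖^2)
      + C₀ * Real.sqrt (∑ n ∈ r, ‖a n‖^2) := by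
    have term : ∀ n ∈ r, (D n)^2 ≤ ((ε/3) * ‖gOp a n‖ + C₀ * ‖a n‖)^2 := by
      intro n _
      have h1 : D n ≤ (ε/3) * ‖gOp a n‖ + C₀ * ‖a n‖ := by
        rw [hGnorm n]
        simp only [hD]
        have := hcoef n
        nlinarith [norm_nonneg (a n), mul_le_mul_of_nonneg_right (hcoef n) (norm_nonneg (a n))]
      exact pow_le_pow_left₀ (hDnn n) h1 2
    have pull : ∀ (c : ℝ) (x : ℕ → ℝ), 0 ≤ c →
        Real.sqrt (∑ n ∈ r, (c * x n)^2) = c * Real.sqrt (∑ n ∈ r, (x n)^2) := by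
      intro c x hc
      have : ∑ n ∈ r, (c * x n)^2 = c^2 * ∑ n ∈ r, (x n)^2 := by
        rw [Finset.mul_sum]
        exact Finset.sum_congr rfl fun n _ => by ring
      rw [this, Real.sqrt_mul (sq_nonneg c), Real.sqrt_sq hc]
    calc Real.sqrt T ≤ Real.sqrt (∑ n ∈ r, ((ε/3) * ‖gOp a n‖ + C₀ * ‖a n‖)^2) :=
          Real.sqrt_le_sqrt (Finset.sum_le_sum term)
      _ ≤ Real.sqrt (∑ n ∈ r, ((ε/3) * ‖gOp a n‖)^2)
            + Real.sqrt (∑ n ∈ r, (C₀ * ‖a n‖)^2) := mink2 r _ _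
      _ = (ε/3) * Real.sqrt (∑ n ∈ r, ‖gOp a n‖^2)
            + C₀ * Real.sqrt (∑ n ∈ r, ‖a n‖^2) := by
          rw [pull (ε/3) _ hδ.le, pull C₀ _ hC₀.le]
  calc Real.sqrt (∑ n ∈ r, ‖gribovH μ lam a n‖^2) ≤ 3 * Real.sqrt T := hHbound
    _ ≤ 3 * ((ε/3) * Real.sqrt (∑ n ∈ r, ‖gOp a n‖^2)
          + C₀ * Real.sqrt (∑ n ∈ r, ‖a n‖^2)) := by
        have := hTb
        nlinarith [Real.sqrt_nonneg T]
    _ = ε * Real.sqrt (∑ n ∈ r, ‖gOp a n‖^2)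
          + 3*C₀ * Real.sqrt (∑ n ∈ r, ‖a n‖^2) := by ring
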